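/- In the setting where Φ_p = 1+x+⋯+x^{p−1} is irreducible over F_2 and d = p−1: for the square-and-add walk on F_2[x]/(Φ_p) with basis {1,x,...,x^{d−1}}, the Fourier transform of the distribution Q_d after d steps satisfies: if |β| is even and β_0 = 0 then Q̂_d(β) = (1−|β|/d)^{d−|β|}(1−(|β|−1)/d)^{|β|}; if |β| is odd and β_0 = 0 then Q̂_d(β) = (1−|β|/d)^{|β|+1}(1−(|β|+1)/d)^{d−|β|−1}; if |β| is even and β_0 = 1 then Q̂_d(β) = (1−|β|/d)^{d−|β|+1}(1−(|β|−1)/d)^{|β|−1}; if |β| is odd and β_0 = 1 then Q̂_d(β) = (1−|β|/d)^{|β|}(1−(|β|+1)/d)^{d−|β|}. -/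

import Mathlib

open Polynomial Finset Matrix

/-- Fourier transform of a function on `(F_2)^d`. -/
noncomputable def ft (d : ℕ) (Q : (Fin d → ZMod 2) → ℝ) (β : Fin d → ZMod 2) : ℝ :=
  ∑ α : Fin d → ZMod 2, Q α * (-1 : ℝ) ^ (∑ i, (α i * β i).val)

/-- Hamming weight of a vector in `(F_2)^d`. -/
def wt (d : ℕ) (β : Fin d → ZMod 2) : ℕ :=
  (univ.filter fun i => β i ≠ 0).card

/-- The step distribution: `0` with probability `1/2`, each standard basis
vector with probability `1/(2d)`. -/
noncomputable def stepQ (d : ℕ) (α : Fin d → ZMod 2) : ℝ :=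
  if α = 0 then 1 / 2 else if ∃ i, α = Pi.single i 1 then 1 / (2 * d) else 0

/-- Distribution after `n` steps of the chain `X₀ = 0`, `Xₙ = A Xₙ₋₁ + εₙ`,
with the `εₙ` i.i.d. with distribution `Q`. -/
noncomputable def chainDist (d : ℕ) (A : Matrix (Fin d) (Fin d) (ZMod 2))
    (Q : (Fin d → ZMod 2) → ℝ) : ℕ → (Fin d → ZMod 2) → ℝ
  | 0 => fun α => if α = 0 then 1 else 0
  | n + 1 => fun α => ∑ γ : Fin d → ZMod 2, chainDist d A Q n γ * Q (α + A.mulVec γ)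

lemma zsign_add (a b : ZMod 2) : (-1:ℝ)^((a+b).val) = (-1)^a.val * (-1)^b.val := by
  rw [ZMod.val_add]; have ha := ZMod.val_lt a; have hb := ZMod.val_lt b
  interval_cases a.val <;> interval_cases b.val <;> norm_num

lemma zsign_sum {ι : Type*} (s : Finset ι) (g : ι → ZMod 2) :
    (-1:ℝ)^((∑ i ∈ s, g i).val) = ∏ i ∈ s, (-1:ℝ)^((g i).val) := by
  induction s using Finset.cons_induction with
  | empty => simp
  | cons a s ha ih => rw [Finset.sum_cons, Finset.prod_cons, zsign_add, ih]

lemma neg_one_pow_sum_val {ι : Type*} [Fintype ι] (g : ι → ZMod 2) :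
    (-1:ℝ)^(∑ i, (g i).val) = (-1:ℝ)^((∑ i, g i).val) := by
  rw [zsign_sum, ← Finset.prod_pow_eq_pow_sum]

noncomputable def bchar (d : ℕ) (α β : Fin d → ZMod 2) : ℝ :=
  (-1:ℝ)^((∑ i, α i * β i).val)

lemma ft_eq (d : ℕ) (Q : (Fin d → ZMod 2) → ℝ) (β : Fin d → ZMod 2) :
    ft d Q β = ∑ α : Fin d → ZMod 2, Q α * bchar d α β := by
  unfold ft bchar
  exact Finset.sum_congr rfl fun α _ => by rw [neg_one_pow_sum_val]

lemma bchar_zero_left (d : ℕ) (β : Fin d → ZMod 2) : bchar d 0 β = 1 := by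
  simp [bchar]

lemma bchar_add_left (d : ℕ) (α γ β : Fin d → ZMod 2) :
    bchar d (α + γ) β = bchar d α β * bchar d γ β := by
  unfold bchar
  have h : (∑ i, (α + γ) i * β i) = (∑ i, α i * β i) + (∑ i, γ i * β i) := by
    rw [← Finset.sum_add_distrib]
    exact Finset.sum_congr rfl fun i _ => by simp [add_mul]
  rw [h, zsign_add]

lemma bchar_mulVec (d : ℕ) (A : Matrix (Fin d) (Fin d) (ZMod 2)) (γ β : Fin d → ZMod 2) :
    bchar d (A.mulVec γ) β = bchar d γ (Aᵀ.mulVec β) := by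
  unfold bchar
  congr 2
  have h1 : ∑ i, A.mulVec γ i * β i = dotProduct (A.mulVec γ) β := rfl
  have h2 : ∑ i, γ i * Aᵀ.mulVec β i = dotProduct γ (Aᵀ.mulVec β) := rfl
  rw [h1, h2, dotProduct_mulVec, ← Matrix.vecMul_transpose]

lemma bchar_single (d : ℕ) (i : Fin d) (β : Fin d → ZMod 2) :
    bchar d (Pi.single i 1) β = (-1:ℝ)^((β i).val) := by
  unfold bchar
  congr 2
  rw [Finset.sum_eq_single i]
  · simp
  · intro j _ hj; simp [Pi.single_eq_of_ne hj]
  · simp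

lemma pi_single_inj (d : ℕ) : Function.Injective
    (fun i : Fin d => (Pi.single i 1 : Fin d → ZMod 2)) := by
  intro i j h
  by_contra hne
  have : (Pi.single i 1 : Fin d → ZMod 2) i = (Pi.single j 1 : Fin d → ZMod 2) i :=
    congrFun h i
  rw [Pi.single_eq_same, Pi.single_eq_of_ne hne] at this
  exact one_ne_zero this

lemma zsign_cases (a : ZMod 2) : (-1:ℝ)^a.val = if a ≠ 0 then (-1:ℝ) else 1 := by
  have ha := ZMod.val_lt a; simp only [ne_eq, ← ZMod.val_eq_zero]
  interval_cases a.val <;> norm_num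

lemma ft_stepQ (d : ℕ) (hd0 : 0 < d) (β : Fin d → ZMod 2) :
    ft d (stepQ d) β = 1 - (wt d β : ℝ) / d := by
  rw [ft_eq]
  have h0 : (0 : Fin d → ZMod 2) ∈ (univ : Finset (Fin d → ZMod 2)) := mem_univ _
  rw [← Finset.add_sum_erase _ _ h0]
  have hstep0 : stepQ d 0 = 1/2 := by simp [stepQ]
  have hrest : ∑ α ∈ univ.erase 0, stepQ d α * bchar d α β
      = ∑ i : Fin d, (1 / (2 * (d:ℝ))) * (-1:ℝ)^((β i).val) := by
    have himg : (univ.erase (0 : Fin d → ZMod 2)).filter (fun α => ∃ i, α = Pi.single i 1)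
        = Finset.image (fun i : Fin d => Pi.single i 1) univ := by
      ext α
      constructor
      · intro hmem
        rw [mem_filter] at hmem
        obtain ⟨-, i, rfl⟩ := hmem
        exact Finset.mem_image.mpr ⟨i, mem_univ i, rfl⟩
      · intro hmem
        obtain ⟨i, -, rfl⟩ := Finset.mem_image.mp hmem
        rw [mem_filter, mem_erase]
        refine ⟨⟨?_, mem_univ _⟩, ⟨i, rfl⟩⟩
        intro h
        have := congrFun h i
        simp at this
    have hsq : ∀ α ∈ univ.erase (0 : Fin d → ZMod 2), stepQ d α * bchar d α β
        = if ∃ i, α = Pi.single i 1 then (1 / (2 * (d:ℝ))) * bchar d α β else 0 := by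
      intro α hα
      rw [mem_erase] at hα
      simp only [stepQ, if_neg hα.1]
      split_ifs <;> simp
    rw [Finset.sum_congr rfl hsq, Finset.sum_ite, Finset.sum_const_zero, add_zero, himg,
      Finset.sum_image (fun i _ j _ h => pi_single_inj d h)]
    exact Finset.sum_congr rfl fun i _ => by rw [bchar_single]
  have hle : wt d β ≤ d := by
    have := Finset.card_filter_le (univ : Finset (Fin d)) (fun i => β i ≠ 0)
    simpa [wt] using this
  have hsign : ∑ i : Fin d, (-1:ℝ)^((β i).val) = ((d : ℝ) - wt d β) - wt d β := by
    have hcard : (univ.filter fun i : Fin d => ¬ β i ≠ 0).card = d - wt d β := by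
      have := Finset.card_filter_add_card_filter_not
        (s := (univ : Finset (Fin d))) (p := fun i => β i ≠ 0)
      simp only [Finset.card_univ, Fintype.card_fin] at this
      unfold wt
      omega
    calc ∑ i : Fin d, (-1:ℝ)^((β i).val)
        = ∑ i : Fin d, (if β i ≠ 0 then (-1:ℝ) else 1) :=
          Finset.sum_congr rfl fun i _ => zsign_cases _
      _ = ((d : ℝ) - wt d β) - wt d β := by
          rw [Finset.sum_ite, Finset.sum_const, Finset.sum_const, hcard]
          show (wt d β) • (-1:ℝ) + (d - wt d β) • (1:ℝ) = _
          rw [nsmul_eq_mul, nsmul_eq_mul, Nat.cast_sub hle]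
          ring
  have hfac : ∑ i : Fin d, (1 / (2 * (d:ℝ))) * (-1:ℝ)^((β i).val)
      = (1 / (2 * (d:ℝ))) * (((d : ℝ) - wt d β) - wt d β) := by
    rw [← Finset.mul_sum, hsign]
  rw [hstep0, bchar_zero_left, hrest, hfac]
  have hdne : (d : ℝ) ≠ 0 := Nat.cast_ne_zero.mpr hd0.ne'
  field_simp
  ring


lemma ft_chainDist_zero (d : ℕ) (A : Matrix (Fin d) (Fin d) (ZMod 2))
    (Q : (Fin d → ZMod 2) → ℝ) (β : Fin d → ZMod 2) :
    ft d (chainDist d A Q 0) β = 1 := by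
  rw [ft_eq]
  have : ∀ α : Fin d → ZMod 2, chainDist d A Q 0 α * bchar d α β
      = if α = 0 then bchar d α β else 0 := by
    intro α; simp only [chainDist]; split_ifs <;> simp
  rw [Finset.sum_congr rfl fun α _ => this α, Finset.sum_ite_eq' univ 0 (bchar d · β)]
  simp [bchar_zero_left]

lemma ft_chainDist_succ (d : ℕ) (A : Matrix (Fin d) (Fin d) (ZMod 2))
    (Q : (Fin d → ZMod 2) → ℝ) (n : ℕ) (β : Fin d → ZMod 2) :
    ft d (chainDist d A Q (n+1)) β = ft d Q β * ft d (chainDist d A Q n) (Aᵀ.mulVec β) := by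
  rw [ft_eq, ft_eq, ft_eq]
  have hself : ∀ v : Fin d → ZMod 2, v + v = 0 := by
    intro v; funext i; exact CharTwo.add_self_eq_zero _
  have key : ∀ γ : Fin d → ZMod 2,
      ∑ α : Fin d → ZMod 2, Q (α + A.mulVec γ) * bchar d α β
        = (∑ α : Fin d → ZMod 2, Q α * bchar d α β) * bchar d γ (Aᵀ.mulVec β) := by
    intro γ
    set v := A.mulVec γ with hv
    have hre : ∑ α : Fin d → ZMod 2, Q (α + v) * bchar d α β
        = ∑ α : Fin d → ZMod 2, Q α * bchar d (α + v) β := by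
      refine Fintype.sum_equiv (Equiv.addRight v) _ _ ?_
      intro α
      simp only [Equiv.coe_addRight]
      rw [add_assoc, hself v, add_zero]
    rw [hre]
    have : ∀ α, Q α * bchar d (α + v) β = (Q α * bchar d α β) * bchar d γ (Aᵀ.mulVec β) := by
      intro α
      rw [bchar_add_left, hv, bchar_mulVec]
      ring
    rw [Finset.sum_congr rfl fun α _ => this α, ← Finset.sum_mul]
  calc ∑ α : Fin d → ZMod 2, chainDist d A Q (n+1) α * bchar d α β
      = ∑ α : Fin d → ZMod 2, ∑ γ : Fin d → ZMod 2,
          chainDist d A Q n γ * Q (α + A.mulVec γ) * bchar d α β := by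
        refine Finset.sum_congr rfl fun α _ => ?_
        simp only [chainDist]
        rw [Finset.sum_mul]
    _ = ∑ γ : Fin d → ZMod 2, chainDist d A Q n γ *
          ∑ α : Fin d → ZMod 2, Q (α + A.mulVec γ) * bchar d α β := by
        rw [Finset.sum_comm]
        refine Finset.sum_congr rfl fun γ _ => ?_
        rw [Finset.mul_sum]
        exact Finset.sum_congr rfl fun α _ => by ring
    _ = _ := by
        rw [Finset.sum_congr rfl fun γ _ => by rw [key γ]]
        rw [Finset.mul_sum]
        exact Finset.sum_congr rfl fun γ _ => by ring

lemma ft_chainDist_prod (d : ℕ) (hd0 : 0 < d) (A : Matrix (Fin d) (Fin d) (ZMod 2)) (n : ℕ) :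
    ∀ β : Fin d → ZMod 2, ft d (chainDist d A (stepQ d) n) β
      = ∏ j ∈ Finset.range n, (1 - (wt d ((Aᵀ^j).mulVec β) : ℝ) / d) := by
  induction n with
  | zero => intro β; simp [ft_chainDist_zero]
  | succ n ih =>
    intro β
    rw [ft_chainDist_succ, ft_stepQ d hd0, ih (Aᵀ.mulVec β), Finset.prod_range_succ']
    have : ∀ j, (Aᵀ^j).mulVec (Aᵀ.mulVec β) = (Aᵀ^(j+1)).mulVec β := by
      intro j
      rw [Matrix.mulVec_mulVec, ← pow_succ]
    rw [Finset.prod_congr rfl fun j _ => by rw [this j]]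
    rw [pow_zero, Matrix.one_mulVec]
    ring

lemma d_le_of_two_pow (p : ℕ) (hp : p.Prime)
    (f : (ZMod 2)[X]) (hf : f = ∑ i ∈ Finset.range p, X ^ i)
    (hirr : Irreducible f) (d : ℕ) (hd : d = p - 1) (hd0 : 0 < d)
    (m : ℕ) (hm : 0 < m) (h1 : (2 : ZMod p)^m = 1) : d ≤ m := by
  classical
  haveI := Fact.mk hp
  haveI := Fact.mk hirr
  set K := AdjoinRoot f with hK
  set r : K := AdjoinRoot.root f with hr
  -- f has degree d
  have hfc : f = Polynomial.cyclotomic p (ZMod 2) := by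
    rw [hf, Polynomial.cyclotomic_prime]
  have hf0 : f ≠ 0 := by
    rw [hfc]; exact Polynomial.cyclotomic_ne_zero p (ZMod 2)
  have hdeg : f.natDegree = d := by
    rw [hfc, Polynomial.natDegree_cyclotomic, Nat.totient_prime hp, hd]
  -- sum of powers of r vanishes
  have hsum : ∑ i ∈ Finset.range p, r ^ i = 0 := by
    have h : (aeval r) (∑ i ∈ Finset.range p, (X : (ZMod 2)[X]) ^ i) = 0 := by
      rw [AdjoinRoot.aeval_eq, ← hf, AdjoinRoot.mk_self]
    simpa using h
  have hrp : r ^ p = 1 := by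
    have := geom_sum_mul r p
    rw [hsum, zero_mul] at this
    have := sub_eq_zero.mp this.symm
    linear_combination this
  -- 2^m % p = 1
  have hmod : 2^m % p = 1 := by
    have hc : ((2^m : ℕ) : ZMod p) = ((1:ℕ) : ZMod p) := by push_cast; simpa using h1
    have hmodeq := (ZMod.natCast_eq_natCast_iff _ _ _).mp hc
    have : 2^m % p = 1 % p := hmodeq
    rwa [Nat.mod_eq_of_lt hp.one_lt] at this
  have hrm : r ^ (2^m) = r := by
    conv_lhs => rw [← Nat.div_add_mod (2^m) p]
    rw [pow_add, pow_mul, hrp, one_pow, one_mul, hmod, pow_one]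
  haveI : CharP K 2 := charP_of_injective_algebraMap (algebraMap (ZMod 2) K).injective 2
  haveI : ExpChar K 2 := ExpChar.prime Nat.prime_two
  -- the algebra endomorphism x ↦ x ^ 2 ^ m
  have hcomm : ∀ (c : ZMod 2) (x : K),
      (iterateFrobenius K 2 m) (c • x) = c • (iterateFrobenius K 2 m) x := by
    intro c x
    simp only [iterateFrobenius_def]
    rw [Algebra.smul_def, Algebra.smul_def, mul_pow, ← map_pow, ZMod.pow_card_pow]
  set ψ : K →ₐ[ZMod 2] K := AlgHom.mk' (iterateFrobenius K 2 m) hcomm with hψ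
  have hψall : ∀ x : K, x ^ (2^m) = x := by
    have htop : AlgHom.equalizer ψ (AlgHom.id (ZMod 2) K) = ⊤ := by
      rw [eq_top_iff, ← AdjoinRoot.adjoinRoot_eq_top, Algebra.adjoin_le_iff,
        Set.singleton_subset_iff]
      show r ∈ AlgHom.equalizer ψ (AlgHom.id (ZMod 2) K)
      rw [AlgHom.mem_equalizer]
      show (iterateFrobenius K 2 m) r = r
      rw [iterateFrobenius_def]
      exact hrm
    intro x
    have hx : x ∈ AlgHom.equalizer ψ (AlgHom.id (ZMod 2) K) := by
      rw [htop]; exact Algebra.mem_top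
    have := (AlgHom.mem_equalizer _ _ x).mp hx
    simpa [hψ, iterateFrobenius_def] using this
  -- counting
  have pb := AdjoinRoot.powerBasis hf0
  have hdim : (AdjoinRoot.powerBasis hf0).dim = d := by
    rw [AdjoinRoot.powerBasis_dim, hdeg]
  let B : Module.Basis (Fin d) (ZMod 2) K :=
    (AdjoinRoot.powerBasis hf0).basis.reindex (finCongr hdim)
  haveI : Fintype K := Fintype.ofEquiv _ B.equivFun.toEquiv.symm
  have hcard : Fintype.card K = 2^d := by
    rw [Fintype.card_congr B.equivFun.toEquiv]
    simp [ZMod.card]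
  have hle : Fintype.card K ≤ 2^m := by
    set q : K[X] := X^(2^m) - X with hq
    have hq0 : q ≠ 0 := FiniteField.X_pow_card_pow_sub_X_ne_zero K hm.ne' one_lt_two
    have hsub : (univ : Finset K) ⊆ q.roots.toFinset := by
      intro x _
      rw [Multiset.mem_toFinset, Polynomial.mem_roots hq0]
      simp [hq, Polynomial.IsRoot, hψall x]
    calc Fintype.card K = (univ : Finset K).card := Finset.card_univ.symm
      _ ≤ q.roots.toFinset.card := Finset.card_le_card hsub
      _ ≤ Multiset.card q.roots := Multiset.toFinset_card_le _
      _ ≤ q.natDegree := Polynomial.card_roots' q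
      _ = 2^m := FiniteField.X_pow_card_pow_sub_X_natDegree_eq K hm.ne' one_lt_two
  rw [hcard] at hle
  exact (Nat.pow_le_pow_iff_right one_lt_two).mp hle

/-- Embedding of `Fin d` into `ZMod p`. -/
def emb (p d : ℕ) (k : Fin d) : ZMod p := ((k : ℕ) : ZMod p)

/-- Coordinates of `root ^ m.val` in the power basis. -/
def cvec (p d : ℕ) (m : ZMod p) (i : Fin d) : ZMod 2 :=
  if m.val < d then (if m.val = (i : ℕ) then 1 else 0) else 1

/-- Extension of `β` to a function on `ZMod p`. -/
def sfun (p d : ℕ) (β : Fin d → ZMod 2) (m : ZMod p) : ZMod 2 :=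
  if h : m.val < d then β ⟨m.val, h⟩ else ∑ i, β i

section D
variable (p : ℕ) (hp : p.Prime) (f : (ZMod 2)[X]) (hf : f = ∑ i ∈ Finset.range p, X ^ i)
  (hirr : Irreducible f) (d : ℕ) (hd : d = p - 1) (hd0 : 0 < d)

include hp hf hirr hd hd0

lemma A_structure (A : Matrix (Fin d) (Fin d) (ZMod 2))
    (hA : ∀ k : Fin d,
      ((AdjoinRoot.root f) ^ (k : ℕ)) ^ 2 =
        ∑ i : Fin d, A i k • (AdjoinRoot.root f) ^ (i : ℕ)) :
    ∀ (k i : Fin d), A i k = cvec p d (2 * emb p d k) i := by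
  classical
  haveI := Fact.mk hp
  haveI := Fact.mk hirr
  set K := AdjoinRoot f with hK
  set r : K := AdjoinRoot.root f with hr
  have hpd : p = d + 1 := by have := hp.pos; omega
  have hfc : f = Polynomial.cyclotomic p (ZMod 2) := by
    rw [hf, Polynomial.cyclotomic_prime]
  have hf0 : f ≠ 0 := by
    rw [hfc]; exact Polynomial.cyclotomic_ne_zero p (ZMod 2)
  have hdeg : f.natDegree = d := by
    rw [hfc, Polynomial.natDegree_cyclotomic, Nat.totient_prime hp, hd]
  have hsum : ∑ i ∈ Finset.range p, r ^ i = 0 := by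
    have h : (aeval r) (∑ i ∈ Finset.range p, (X : (ZMod 2)[X]) ^ i) = 0 := by
      rw [AdjoinRoot.aeval_eq, ← hf, AdjoinRoot.mk_self]
    simpa using h
  have hrp : r ^ p = 1 := by
    have h1 := geom_sum_mul r p
    rw [hsum, zero_mul] at h1
    have := sub_eq_zero.mp h1.symm
    linear_combination this
  haveI : CharP K 2 := charP_of_injective_algebraMap (algebraMap (ZMod 2) K).injective 2
  -- r ^ d is the sum of lower powers
  have hrd : r ^ d = ∑ i ∈ Finset.range d, r ^ i := by
    have h1 : ∑ i ∈ Finset.range d, r ^ i + r ^ d = 0 := by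
      rw [← Finset.sum_range_succ, ← hpd]; exact hsum
    have h2 : r ^ d = -(∑ i ∈ Finset.range d, r ^ i) := by linear_combination h1
    rw [h2, CharTwo.neg_eq]
  -- basis
  have hdim : (AdjoinRoot.powerBasis hf0).dim = d := by
    rw [AdjoinRoot.powerBasis_dim, hdeg]
  let B : Module.Basis (Fin d) (ZMod 2) K :=
    (AdjoinRoot.powerBasis hf0).basis.reindex (finCongr hdim)
  have hB : ∀ i : Fin d, B i = r ^ (i : ℕ) := by
    intro i
    rw [Module.Basis.reindex_apply, PowerBasis.coe_basis, AdjoinRoot.powerBasis_gen]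
    congr 1
  have coords_unique : ∀ a b : Fin d → ZMod 2,
      ∑ i, a i • r ^ (i : ℕ) = ∑ i, b i • r ^ (i : ℕ) → a = b := by
    intro a b h
    have ha : ∑ i, a i • r ^ (i : ℕ) = B.equivFun.symm a := by
      rw [Module.Basis.equivFun_symm_apply]
      exact Finset.sum_congr rfl fun i _ => by rw [hB]
    have hb : ∑ i, b i • r ^ (i : ℕ) = B.equivFun.symm b := by
      rw [Module.Basis.equivFun_symm_apply]
      exact Finset.sum_congr rfl fun i _ => by rw [hB]
    rw [ha, hb] at h
    exact B.equivFun.symm.injective h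
  -- r ^ (m.val) in coordinates
  have rpow_val : ∀ m : ZMod p, r ^ m.val = ∑ i : Fin d, cvec p d m i • r ^ (i : ℕ) := by
    intro m
    by_cases h : m.val < d
    · rw [Finset.sum_eq_single ⟨m.val, h⟩]
      · simp [cvec, h]
      · intro i _ hi
        have : m.val ≠ (i : ℕ) := by
          intro hc
          exact hi (by apply Fin.ext; simp [← hc])
        simp [cvec, h, this]
      · simp
    · have hm : m.val = d := by
        have := ZMod.val_lt m
        omega
      have : ∀ i : Fin d, cvec p d m i = 1 := by
        intro i; simp [cvec, h]
      rw [Finset.sum_congr rfl fun i _ => by rw [this i, one_smul]]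
      rw [hm, hrd, Fin.sum_univ_eq_sum_range (fun i => r ^ i)]
  -- r ^ n only depends on n mod p
  have rpow_nat : ∀ n : ℕ, r ^ n = r ^ ((n : ZMod p)).val := by
    intro n
    conv_lhs => rw [← Nat.div_add_mod n p]
    rw [pow_add, pow_mul, hrp, one_pow, one_mul, ZMod.val_natCast]
  intro k i
  have h1 : (r ^ (k : ℕ)) ^ 2 = r ^ ((2 * emb p d k)).val := by
    rw [← pow_mul, mul_comm, rpow_nat (2 * (k:ℕ))]
    congr 2
    unfold emb
    push_cast
    ring
  have h2 := hA k
  rw [h1, rpow_val (2 * emb p d k)] at h2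
  have := coords_unique _ _ h2.symm
  exact congrFun this i

end D

lemma zmod2_add_eq_zero {a b : ZMod 2} (h : a + b = 0) : b = a := by
  have h2 : a + (a + b) = a + 0 := by rw [h]
  rwa [← add_assoc, CharTwo.add_self_eq_zero, zero_add, add_zero] at h2


section E
variable (p : ℕ) [hpf : Fact p.Prime] (d : ℕ) (hd : d = p - 1) (hd0 : 0 < d)
include hd hd0

lemma emb_val (k : Fin d) : (emb p d k).val = (k : ℕ) := by
  have hp := hpf.out
  exact ZMod.val_cast_of_lt (by have := k.2; have := hp.pos; omega)

lemma emb_inj : Function.Injective (emb p d) := by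
  intro a b h
  have := congrArg ZMod.val h
  rw [emb_val p d hd hd0, emb_val p d hd hd0] at this
  exact Fin.ext this

lemma sfun_emb (β : Fin d → ZMod 2) (k : Fin d) : sfun p d β (emb p d k) = β k := by
  unfold sfun
  rw [dif_pos (by rw [emb_val p d hd hd0]; exact k.2)]
  exact congrArg β (Fin.ext (emb_val p d hd hd0 k))

lemma image_emb : (univ : Finset (Fin d)).image (emb p d) = univ.erase ((d : ℕ) : ZMod p) := by
  have hp := hpf.out
  have hdlt : d < p := by have := hp.pos; omega
  ext m
  rw [Finset.mem_image, Finset.mem_erase]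
  constructor
  · rintro ⟨k, -, rfl⟩
    refine ⟨?_, mem_univ _⟩
    intro h
    have := congrArg ZMod.val h
    rw [emb_val p d hd hd0, ZMod.val_cast_of_lt hdlt] at this
    exact absurd this (Nat.ne_of_lt k.2)
  · rintro ⟨hne, -⟩
    have hlt : m.val < d := by
      have h1 := ZMod.val_lt m
      rcases Nat.lt_or_ge m.val d with h | h
      · exact h
      · exfalso
        have hv : m.val = d := by omega
        apply hne
        have := ZMod.natCast_rightInverse (n := p) m
        rw [← this, hv]
    exact ⟨⟨m.val, hlt⟩, mem_univ _, ZMod.natCast_rightInverse m⟩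

lemma sum_sfun (β : Fin d → ZMod 2) : ∑ m : ZMod p, sfun p d β m = 0 := by
  have hp := hpf.out
  rw [← Finset.add_sum_erase _ _ (mem_univ ((d : ℕ) : ZMod p)),
    ← image_emb p d hd hd0,
    Finset.sum_image (fun a _ b _ h => emb_inj p d hd hd0 h)]
  have h1 : sfun p d β ((d : ℕ) : ZMod p) = ∑ i, β i := by
    unfold sfun
    rw [dif_neg]
    rw [ZMod.val_cast_of_lt (by have := hp.pos; omega)]
    omega
  have h2 : ∀ k : Fin d, sfun p d β (emb p d k) = β k := sfun_emb p d hd hd0 β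
  rw [h1, Finset.sum_congr rfl fun k _ => h2 k]
  exact CharTwo.add_self_eq_zero _

lemma sum_sfun_two (β : Fin d → ZMod 2) : ∑ m : ZMod p, sfun p d β (2 * m) = 0 := by
  have hp := hpf.out
  by_cases h2 : (2 : ZMod p) = 0
  · have hp2 : p = 2 := by
      have hc : ((2:ℕ) : ZMod p) = 0 := by push_cast; exact h2
      have hdvd := (ZMod.natCast_eq_zero_iff 2 p).mp hc
      have h2le := hp.two_le
      have := Nat.le_of_dvd (by norm_num) hdvd
      omega
    have hconst : ∀ m : ZMod p, sfun p d β (2 * m) = sfun p d β 0 := by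
      intro m; rw [h2, zero_mul]
    rw [Finset.sum_congr rfl fun m _ => hconst m, Finset.sum_const, Finset.card_univ,
      ZMod.card]
    have hcast : ((p:ℕ) : ZMod 2) = 0 := by rw [hp2]; decide
    rw [nsmul_eq_mul, hcast, zero_mul]
  · have := Fintype.sum_equiv (Equiv.mulLeft₀ (2 : ZMod p) h2)
      (fun m => sfun p d β (2 * m)) (fun m => sfun p d β m) (fun m => rfl)
    rw [this]
    exact sum_sfun p d hd hd0 β

lemma cvec_dot (β : Fin d → ZMod 2) (m : ZMod p) :
    ∑ j : Fin d, cvec p d m j * β j = sfun p d β m := by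
  unfold cvec sfun
  by_cases h : m.val < d
  · rw [dif_pos h, Finset.sum_eq_single (⟨m.val, h⟩ : Fin d)]
    · simp [h]
    · intro j _ hj
      have hne : m.val ≠ (j : ℕ) := by
        intro hc
        exact hj (Fin.ext (hc.symm : (j:ℕ) = m.val))
      rw [if_pos h, if_neg hne, zero_mul]
    · simp
  · rw [dif_neg h]
    refine Finset.sum_congr rfl fun j _ => ?_
    rw [if_neg h, one_mul]

lemma mulVec_emb (A : Matrix (Fin d) (Fin d) (ZMod 2))
    (hAc : ∀ (k i : Fin d), A i k = cvec p d (2 * emb p d k) i)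
    (β : Fin d → ZMod 2) (k : Fin d) :
    Aᵀ.mulVec β k = sfun p d β (2 * emb p d k) := by
  show ∑ j, Aᵀ k j * β j = _
  rw [← cvec_dot p d hd hd0 β (2 * emb p d k)]
  exact Finset.sum_congr rfl fun j _ => by rw [Matrix.transpose_apply, hAc k j]

lemma sfun_mulVec (A : Matrix (Fin d) (Fin d) (ZMod 2))
    (hAc : ∀ (k i : Fin d), A i k = cvec p d (2 * emb p d k) i)
    (β : Fin d → ZMod 2) (m : ZMod p) :
    sfun p d (Aᵀ.mulVec β) m = sfun p d β (2 * m) := by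
  by_cases h : m.val < d
  · have h1 : sfun p d (Aᵀ.mulVec β) m = Aᵀ.mulVec β ⟨m.val, h⟩ := dif_pos h
    rw [h1, mulVec_emb p d hd hd0 A hAc β]
    congr 2
    exact ZMod.natCast_rightInverse m
  · have hm : m = ((d : ℕ) : ZMod p) := by
      have h1 := ZMod.val_lt m
      have hv : m.val = d := by omega
      have := ZMod.natCast_rightInverse (n := p) m
      rw [← this, hv]
    have h1 : sfun p d (Aᵀ.mulVec β) m = ∑ i, Aᵀ.mulVec β i := dif_neg h
    rw [h1, Finset.sum_congr rfl fun k _ => mulVec_emb p d hd hd0 A hAc β k]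
    have hsplit := sum_sfun_two p d hd hd0 β
    rw [← Finset.add_sum_erase _ _ (mem_univ ((d : ℕ) : ZMod p)),
      ← image_emb p d hd hd0,
      Finset.sum_image (fun a _ b _ hab => emb_inj p d hd hd0 hab)] at hsplit
    rw [zmod2_add_eq_zero hsplit, hm]

lemma sfun_pow (A : Matrix (Fin d) (Fin d) (ZMod 2))
    (hAc : ∀ (k i : Fin d), A i k = cvec p d (2 * emb p d k) i) :
    ∀ (j : ℕ) (β : Fin d → ZMod 2) (m : ZMod p),
      sfun p d ((Aᵀ^j).mulVec β) m = sfun p d β ((2:ZMod p)^j * m) := by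
  intro j
  induction j with
  | zero => intro β m; rw [pow_zero, Matrix.one_mulVec, pow_zero, one_mul]
  | succ j ih =>
    intro β m
    have h1 : (Aᵀ^(j+1)).mulVec β = (Aᵀ^j).mulVec (Aᵀ.mulVec β) := by
      rw [Matrix.mulVec_mulVec, ← pow_succ]
    rw [h1, ih (Aᵀ.mulVec β) m, sfun_mulVec p d hd hd0 A hAc]
    congr 1
    ring

lemma wt_pow (A : Matrix (Fin d) (Fin d) (ZMod 2))
    (hAc : ∀ (k i : Fin d), A i k = cvec p d (2 * emb p d k) i)
    (j : ℕ) (hj : (2 : ZMod p)^j ≠ 0) (β : Fin d → ZMod 2) :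
    wt d ((Aᵀ^j).mulVec β)
      = if sfun p d β ((2:ZMod p)^j * ((d:ℕ):ZMod p)) ≠ 0
        then (univ.filter fun m : ZMod p => sfun p d β m ≠ 0).card - 1
        else (univ.filter fun m : ZMod p => sfun p d β m ≠ 0).card := by
  classical
  set P : ZMod p → Prop := fun m => sfun p d β m ≠ 0 with hP
  set g : Fin d → ZMod p := fun k => (2:ZMod p)^j * emb p d k with hg
  have hginj : Function.Injective g := by
    intro a b hab
    exact emb_inj p d hd hd0 (mul_left_cancel₀ hj hab)
  have hcond : ∀ k : Fin d, ((Aᵀ^j).mulVec β k ≠ 0) ↔ P (g k) := by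
    intro k
    have heq : (Aᵀ^j).mulVec β k = sfun p d β ((2:ZMod p)^j * emb p d k) := by
      rw [← sfun_pow p d hd hd0 A hAc j β (emb p d k)]
      exact (sfun_emb p d hd hd0 _ k).symm
    rw [hP, hg, heq]
  have himg : (univ : Finset (Fin d)).image g = univ.erase ((2:ZMod p)^j * ((d:ℕ):ZMod p)) := by
    have h1 : (univ : Finset (Fin d)).image g
        = ((univ : Finset (Fin d)).image (emb p d)).image (fun x => (2:ZMod p)^j * x) := by
      rw [Finset.image_image]
      rfl
    have hmulinj : Function.Injective (fun x : ZMod p => (2:ZMod p)^j * x) :=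
      fun a b hab => mul_left_cancel₀ hj hab
    rw [h1, image_emb p d hd hd0, Finset.image_erase hmulinj]
    congr 1
    apply Finset.eq_univ_of_card
    rw [Finset.card_image_of_injective _ hmulinj, Finset.card_univ]
  calc wt d ((Aᵀ^j).mulVec β)
      = (univ.filter fun k => P (g k)).card := by
        unfold wt
        congr 1
        exact Finset.filter_congr fun k _ => by rw [hcond k]
    _ = ((univ.image g).filter P).card := by
        rw [Finset.filter_image, Finset.card_image_of_injective _ hginj]
    _ = _ := by
        rw [himg, Finset.filter_erase]
        by_cases hPx : P ((2:ZMod p)^j * ((d:ℕ):ZMod p))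
        · rw [if_pos hPx, Finset.card_erase_of_mem (Finset.mem_filter.mpr ⟨mem_univ _, hPx⟩)]
        · rw [if_neg hPx, Finset.erase_eq_of_notMem
            (fun hc => hPx (Finset.mem_filter.mp hc).2)]

end E

section G
variable (p : ℕ) [hpf : Fact p.Prime] (d : ℕ) (hd : d = p - 1) (hd0 : 0 < d)

lemma zmod2_ne_zero (a : ZMod 2) (h : a ≠ 0) : a = 1 := by revert a; decide

lemma sum_beta (d : ℕ) (β : Fin d → ZMod 2) : ∑ i, β i = ((wt d β : ℕ) : ZMod 2) := by
  have h1 : ∀ a : ZMod 2, a = if a ≠ 0 then 1 else 0 := by decide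
  rw [Finset.sum_congr rfl fun i _ => h1 (β i), Finset.sum_ite, Finset.sum_const,
    Finset.sum_const_zero, add_zero, nsmul_eq_mul, mul_one]
  rfl

include hd hd0

lemma final_eval (A : Matrix (Fin d) (Fin d) (ZMod 2))
    (hAc : ∀ (k i : Fin d), A i k = cvec p d (2 * emb p d k) i)
    (hpow : ∀ m : ℕ, 0 < m → (2 : ZMod p)^m = 1 → d ≤ m)
    (β : Fin d → ZMod 2) :
    ∏ j ∈ Finset.range d, (1 - (wt d ((Aᵀ^j).mulVec β) : ℝ) / d) =
      if Even (wt d β) ∧ β ⟨0, hd0⟩ = 0 then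
        (1 - (wt d β : ℝ) / d) ^ (d - wt d β) *
          (1 - ((wt d β : ℝ) - 1) / d) ^ (wt d β)
      else if Odd (wt d β) ∧ β ⟨0, hd0⟩ = 0 then
        (1 - (wt d β : ℝ) / d) ^ (wt d β + 1) *
          (1 - ((wt d β : ℝ) + 1) / d) ^ (d - wt d β - 1)
      else if Even (wt d β) ∧ β ⟨0, hd0⟩ = 1 then
        (1 - (wt d β : ℝ) / d) ^ (d - wt d β + 1) *
          (1 - ((wt d β : ℝ) - 1) / d) ^ (wt d β - 1)
      else
        (1 - (wt d β : ℝ) / d) ^ (wt d β) *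
          (1 - ((wt d β : ℝ) + 1) / d) ^ (d - wt d β) := by
  classical
  have hp := hpf.out
  have hpd : p = d + 1 := by have := hp.pos; omega
  have hdbar_val : (((d:ℕ)) : ZMod p).val = d := ZMod.val_cast_of_lt (by omega)
  have hdbar_ne : (((d:ℕ)) : ZMod p) ≠ 0 := by
    intro h
    rw [h, ZMod.val_zero] at hdbar_val
    omega
  have hx_ne : ∀ j : ℕ, j < d → (2 : ZMod p)^j ≠ 0 := by
    intro j hj h0
    rcases Nat.eq_zero_or_pos j with rfl | hjpos
    · rw [pow_zero] at h0; exact one_ne_zero h0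
    · have h2 : (2 : ZMod p) = 0 := by
        have hz := pow_eq_zero_iff (M₀ := ZMod p) (a := (2:ZMod p)) (n := j) hjpos.ne'
        exact hz.mp h0
      have hp2 : p = 2 := by
        have hc : ((2:ℕ) : ZMod p) = 0 := by push_cast; exact h2
        have hdvd := (ZMod.natCast_eq_zero_iff 2 p).mp hc
        have := Nat.le_of_dvd (by norm_num) hdvd
        have := hp.two_le
        omega
      omega
  have two_pow_inj : ∀ i j : ℕ, i < d → j < d → (2:ZMod p)^i = (2:ZMod p)^j → i = j := by
    have key : ∀ i j : ℕ, i ≤ j → j < d → (2:ZMod p)^i = (2:ZMod p)^j → i = j := by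
      intro i j hij hjd h
      by_contra hne
      have hlt : i < j := lt_of_le_of_ne hij hne
      have h2ne : (2:ZMod p)^i ≠ 0 := hx_ne i (lt_trans hlt hjd)
      have heq : (2:ZMod p)^i * 1 = (2:ZMod p)^i * (2:ZMod p)^(j - i) := by
        rw [mul_one, ← pow_add, h]
        congr 1
        omega
      have h1 : (2:ZMod p)^(j-i) = 1 := (mul_left_cancel₀ h2ne heq).symm
      have := hpow (j - i) (by omega) h1
      omega
    intro i j hi hj h
    rcases le_total i j with hij | hij
    · exact key i j hij hj h
    · exact (key j i hij hi h.symm).symm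
  have hxinj : Function.Injective (fun j : Fin d => (2:ZMod p)^(j:ℕ) * ((d:ℕ) : ZMod p)) := by
    intro a b hab
    have := mul_right_cancel₀ hdbar_ne hab
    exact Fin.ext (two_pow_inj _ _ a.2 b.2 this)
  have hximg : (univ : Finset (Fin d)).image (fun j : Fin d => (2:ZMod p)^(j:ℕ) * ((d:ℕ) : ZMod p))
      = univ.erase 0 := by
    apply Finset.eq_of_subset_of_card_le
    · intro m hm
      obtain ⟨j, -, rfl⟩ := Finset.mem_image.mp hm
      exact Finset.mem_erase.mpr ⟨mul_ne_zero (hx_ne _ j.2) hdbar_ne, mem_univ _⟩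
    · rw [Finset.card_image_of_injective _ hxinj, Finset.card_erase_of_mem (mem_univ _),
        Finset.card_univ, Finset.card_univ, ZMod.card, Fintype.card_fin]
      omega
  have h0lt : (0 : ZMod p).val < d := by simpa using hd0
  have h0P : sfun p d β 0 = β ⟨0, hd0⟩ := by
    unfold sfun
    rw [dif_pos h0lt]
    exact congrArg β (Fin.ext (by simp))
  have hdbarP : sfun p d β ((d:ℕ) : ZMod p) = ((wt d β : ℕ) : ZMod 2) := by
    unfold sfun
    rw [dif_neg (by rw [hdbar_val]; omega)]
    exact sum_beta d β
  have hPd_iff : (sfun p d β ((d:ℕ) : ZMod p) ≠ 0) ↔ ¬ Even (wt d β) := by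
    rw [hdbarP, Ne, ZMod.natCast_eq_zero_iff,
      Nat.dvd_iff_mod_eq_zero, Nat.even_iff]
  have hwt_er : (((univ : Finset (ZMod p)).erase ((d:ℕ) : ZMod p)).filter
      (fun m => sfun p d β m ≠ 0)).card = wt d β := by
    rw [← image_emb p d hd hd0, Finset.filter_image,
      Finset.card_image_of_injective _ (emb_inj p d hd hd0)]
    unfold wt
    congr 1
    refine Finset.filter_congr fun k _ => ?_
    show sfun p d β (emb p d k) ≠ 0 ↔ β k ≠ 0
    rw [sfun_emb p d hd hd0 β k]
  have memf : ∀ x : ZMod p, sfun p d β x ≠ 0 →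
      x ∈ (univ : Finset (ZMod p)).filter (fun m => sfun p d β m ≠ 0) :=
    fun x hx => Finset.mem_filter.mpr ⟨mem_univ _, hx⟩
  have nmemf : ∀ x : ZMod p, ¬ (sfun p d β x ≠ 0) →
      x ∉ (univ : Finset (ZMod p)).filter (fun m => sfun p d β m ≠ 0) :=
    fun x hx hc => hx (Finset.mem_filter.mp hc).2
  have hT_eq : ((univ : Finset (ZMod p)).filter (fun m => sfun p d β m ≠ 0)).card
      = if Even (wt d β) then wt d β else wt d β + 1 := by
    rw [Finset.filter_erase] at hwt_er
    by_cases hPd : sfun p d β ((d:ℕ) : ZMod p) ≠ 0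
    · rw [if_neg (hPd_iff.mp hPd)]
      rw [Finset.card_erase_of_mem (memf _ hPd)] at hwt_er
      have hTpos : 0 < ((univ : Finset (ZMod p)).filter (fun m => sfun p d β m ≠ 0)).card :=
        Finset.card_pos.mpr ⟨_, memf _ hPd⟩
      omega
    · rw [if_pos (not_not.mp (fun h => hPd (hPd_iff.mpr h)))]
      rw [Finset.erase_eq_of_notMem (nmemf _ hPd)] at hwt_er
      omega
  have hN1_eq : (((univ : Finset (ZMod p)).erase 0).filter (fun m => sfun p d β m ≠ 0)).card
      = if β ⟨0, hd0⟩ ≠ 0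
        then ((univ : Finset (ZMod p)).filter (fun m => sfun p d β m ≠ 0)).card - 1
        else ((univ : Finset (ZMod p)).filter (fun m => sfun p d β m ≠ 0)).card := by
    rw [Finset.filter_erase]
    by_cases h0 : β ⟨0, hd0⟩ ≠ 0
    · rw [if_pos h0]
      have hP0 : sfun p d β 0 ≠ 0 := by rw [h0P]; exact h0
      rw [Finset.card_erase_of_mem (memf _ hP0)]
    · rw [if_neg h0]
      have hP0 : ¬ (sfun p d β 0 ≠ 0) := by rw [h0P]; exact h0
      rw [Finset.erase_eq_of_notMem (nmemf _ hP0)]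
  have hN0_eq : (((univ : Finset (ZMod p)).erase 0).filter (fun m => ¬ sfun p d β m ≠ 0)).card
      = d - (((univ : Finset (ZMod p)).erase 0).filter (fun m => sfun p d β m ≠ 0)).card := by
    have h := Finset.card_filter_add_card_filter_not
      (s := (univ : Finset (ZMod p)).erase 0) (p := fun m => sfun p d β m ≠ 0)
    rw [Finset.card_erase_of_mem (mem_univ _), Finset.card_univ, ZMod.card] at h
    omega
  have hw_le : wt d β ≤ d := by
    have := Finset.card_filter_le (univ : Finset (Fin d)) (fun i => β i ≠ 0)
    rw [Finset.card_univ, Fintype.card_fin] at this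
    exact this
  -- rewrite the product
  have hprod : ∏ j ∈ Finset.range d, (1 - (wt d ((Aᵀ^j).mulVec β) : ℝ) / d)
      = (1 - ((((univ : Finset (ZMod p)).filter (fun m => sfun p d β m ≠ 0)).card - 1 : ℕ) : ℝ)/d)
          ^ (((univ : Finset (ZMod p)).erase 0).filter (fun m => sfun p d β m ≠ 0)).card
        * (1 - ((((univ : Finset (ZMod p)).filter (fun m => sfun p d β m ≠ 0)).card : ℕ) : ℝ)/d)
          ^ (d - (((univ : Finset (ZMod p)).erase 0).filter (fun m => sfun p d β m ≠ 0)).card) := by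
    set G : ZMod p → ℝ := fun m => if sfun p d β m ≠ 0
        then (1 - ((((univ : Finset (ZMod p)).filter (fun m => sfun p d β m ≠ 0)).card - 1 : ℕ) : ℝ)/d)
        else (1 - ((((univ : Finset (ZMod p)).filter (fun m => sfun p d β m ≠ 0)).card : ℕ) : ℝ)/d)
      with hG
    have hstep1 : ∀ j ∈ Finset.range d, (1 - (wt d ((Aᵀ^j).mulVec β) : ℝ) / d)
        = G ((2:ZMod p)^j * ((d:ℕ) : ZMod p)) := by
      intro j hj
      rw [Finset.mem_range] at hj
      rw [wt_pow p d hd hd0 A hAc j (hx_ne j hj) β, hG]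
      by_cases hPx : sfun p d β ((2:ZMod p)^j * ((d:ℕ) : ZMod p)) ≠ 0
      · simp only [if_pos hPx]
      · simp only [if_neg hPx]
    calc ∏ j ∈ Finset.range d, (1 - (wt d ((Aᵀ^j).mulVec β) : ℝ) / d)
        = ∏ j ∈ Finset.range d, G ((2:ZMod p)^j * ((d:ℕ) : ZMod p)) :=
          Finset.prod_congr rfl hstep1
      _ = ∏ j : Fin d, G ((2:ZMod p)^(j:ℕ) * ((d:ℕ) : ZMod p)) :=
          (Fin.prod_univ_eq_prod_range _ _).symm
      _ = ∏ m ∈ (univ : Finset (Fin d)).image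
            (fun j : Fin d => (2:ZMod p)^(j:ℕ) * ((d:ℕ) : ZMod p)), G m :=
          (Finset.prod_image (fun a _ b _ h => hxinj h)).symm
      _ = ∏ m ∈ (univ : Finset (ZMod p)).erase 0, G m := by rw [hximg]
      _ = _ := by
          rw [hG, Finset.prod_ite, Finset.prod_const, Finset.prod_const, hN0_eq]
  rw [hprod]
  by_cases hEv : Even (wt d β)
  · by_cases hβ0 : β ⟨0, hd0⟩ = 0
    · rw [if_pos ⟨hEv, hβ0⟩]
      rw [if_neg (by simpa using hβ0)] at hN1_eq
      rw [if_pos hEv] at hT_eq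
      rcases Nat.eq_zero_or_pos (wt d β) with hw0 | hwpos
      · rw [hN1_eq, hT_eq, hw0]
        norm_num
      · rw [hN1_eq, hT_eq]
        rw [Nat.cast_sub (by omega), mul_comm]
        push_cast
        ring_nf
    · have hβ1 : β ⟨0, hd0⟩ = 1 := zmod2_ne_zero _ hβ0
      have hw1 : 1 ≤ wt d β :=
        Finset.card_pos.mpr ⟨⟨0, hd0⟩, Finset.mem_filter.mpr ⟨mem_univ _, hβ0⟩⟩
      rw [if_neg (fun h => hβ0 h.2), if_neg (fun h => hβ0 h.2), if_pos ⟨hEv, hβ1⟩]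
      rw [if_pos (by simpa using hβ0)] at hN1_eq
      rw [if_pos hEv] at hT_eq
      rw [hN1_eq, hT_eq]
      rw [show d - (wt d β - 1) = d - wt d β + 1 by omega]
      rw [Nat.cast_sub (by omega), mul_comm]
      push_cast
      ring_nf
  · have hOdd : Odd (wt d β) := Nat.not_even_iff_odd.mp hEv
    by_cases hβ0 : β ⟨0, hd0⟩ = 0
    · rw [if_neg (fun h => hEv h.1), if_pos ⟨hOdd, hβ0⟩]
      rw [if_neg (by simpa using hβ0)] at hN1_eq
      rw [if_neg hEv] at hT_eq
      rw [hN1_eq, hT_eq]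
      rw [show d - (wt d β + 1) = d - wt d β - 1 by omega]
      push_cast
      ring_nf
    · have hβ1 : β ⟨0, hd0⟩ = 1 := zmod2_ne_zero _ hβ0
      rw [if_neg (fun h => hβ0 h.2), if_neg (fun h => hβ0 h.2),
        if_neg (fun h => hEv h.1)]
      rw [if_pos (by simpa using hβ0)] at hN1_eq
      rw [if_neg hEv] at hT_eq
      rw [hN1_eq, hT_eq]
      push_cast
      ring_nf
end G



theorem ft_square_and_add_after_d_steps (p : ℕ) (hp : p.Prime)
    (f : (ZMod 2)[X]) (hf : f = ∑ i ∈ Finset.range p, X ^ i)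
    (hirr : Irreducible f) (d : ℕ) (hd : d = p - 1) (hd0 : 0 < d)
    (A : Matrix (Fin d) (Fin d) (ZMod 2))
    -- `A` is the matrix of squaring in the basis `1, x, ..., x^(d-1)`:
    (hA : ∀ k : Fin d,
      ((AdjoinRoot.root f) ^ (k : ℕ)) ^ 2 =
        ∑ i : Fin d, A i k • (AdjoinRoot.root f) ^ (i : ℕ))
    (β : Fin d → ZMod 2) :
    ft d (chainDist d A (stepQ d) d) β =
      if Even (wt d β) ∧ β ⟨0, hd0⟩ = 0 then
        (1 - (wt d β : ℝ) / d) ^ (d - wt d β) *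
          (1 - ((wt d β : ℝ) - 1) / d) ^ (wt d β)
      else if Odd (wt d β) ∧ β ⟨0, hd0⟩ = 0 then
        (1 - (wt d β : ℝ) / d) ^ (wt d β + 1) *
          (1 - ((wt d β : ℝ) + 1) / d) ^ (d - wt d β - 1)
      else if Even (wt d β) ∧ β ⟨0, hd0⟩ = 1 then
        (1 - (wt d β : ℝ) / d) ^ (d - wt d β + 1) *
          (1 - ((wt d β : ℝ) - 1) / d) ^ (wt d β - 1)
      else
        (1 - (wt d β : ℝ) / d) ^ (wt d β) *
          (1 - ((wt d β : ℝ) + 1) / d) ^ (d - wt d β) := by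
  haveI := Fact.mk hp
  have hAc := A_structure p hp f hf hirr d hd hd0 A hA
  have hpow : ∀ m : ℕ, 0 < m → (2 : ZMod p)^m = 1 → d ≤ m :=
    fun m hm h1 => d_le_of_two_pow p hp f hf hirr d hd hd0 m hm h1
  rw [ft_chainDist_prod d hd0 A d β]
  exact final_eval p d hd hd0 A hAc hpow β
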